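/- A permutation π of {1,…,n} avoids both the pattern 321 and the pattern 3412 if and only if its inversion graph G_π is a forest (i.e., contains no cycle). -/

import Mathlib

/-- The inversion graph of a permutation. -/
def invGraph {n : ℕ} (π : Equiv.Perm (Fin n)) : SimpleGraph (Fin n) :=
  SimpleGraph.fromRel fun i j => i < j ∧ π j < π i

/-- `π` contains the pattern `321`: there are indices `i < j < k` with
`π i > π j > π k`. -/
def Contains321 {n : ℕ} (π : Equiv.Perm (Fin n)) : Prop :=
  ∃ i j k : Fin n, i < j ∧ j < k ∧ π k < π j ∧ π j < π i

/-- `π` contains the pattern `3412`: there are indices `i < j < k < l` with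
`π k < π l < π i < π j`. -/
def Contains3412 {n : ℕ} (π : Equiv.Perm (Fin n)) : Prop :=
  ∃ i j k l : Fin n, i < j ∧ j < k ∧ k < l ∧ π k < π l ∧ π l < π i ∧ π i < π j

section Aux

variable {n : ℕ} (π : Equiv.Perm (Fin n))

lemma invGraph_adj {i j : Fin n} (hij : i < j) :
    (invGraph π).Adj i j ↔ π j < π i := by
  constructor
  · rintro (⟨hne, (⟨-, h⟩ | ⟨h', -⟩)⟩)
    · exact h
    · exact absurd hij (not_lt.2 h'.le)
  · intro h
    exact ⟨hij.ne, Or.inl ⟨hij, h⟩⟩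

lemma lt_of_not_adj {i j : Fin n} (hij : i < j) (h : ¬ (invGraph π).Adj i j) :
    π i < π j := by
  rcases lt_or_ge (π i) (π j) with h' | h'
  · exact h'
  · exact absurd ((invGraph_adj π hij).2 (lt_of_le_of_ne h' (by simp [hij.ne']))) h

lemma triangle_not_acyclic {V : Type*} {G : SimpleGraph V} {i j k : V}
    (h1 : G.Adj i j) (h2 : G.Adj j k) (h3 : G.Adj k i)
    (hij : i ≠ j) (hjk : j ≠ k) (hik : i ≠ k) :
    ¬ G.IsAcyclic := by
  intro hG
  exact hG (SimpleGraph.Walk.cons h1 (SimpleGraph.Walk.cons h2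
    (SimpleGraph.Walk.cons h3 SimpleGraph.Walk.nil))) (by
      simp [SimpleGraph.Walk.isCycle_def, SimpleGraph.Walk.isTrail_def,
        Sym2.eq, Sym2.rel_iff', hij, hjk, hik, hij.symm, hjk.symm, hik.symm])

lemma quad_not_acyclic {V : Type*} {G : SimpleGraph V} {i j k l : V}
    (h1 : G.Adj i k) (h2 : G.Adj k j) (h3 : G.Adj j l) (h4 : G.Adj l i)
    (hij : i ≠ j) (hik : i ≠ k) (hil : i ≠ l) (hjk : j ≠ k) (hjl : j ≠ l) (hkl : k ≠ l) :
    ¬ G.IsAcyclic := by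
  intro hG
  exact hG (SimpleGraph.Walk.cons h1 (SimpleGraph.Walk.cons h2
    (SimpleGraph.Walk.cons h3 (SimpleGraph.Walk.cons h4 SimpleGraph.Walk.nil)))) (by
      simp [SimpleGraph.Walk.isCycle_def, SimpleGraph.Walk.isTrail_def,
        Sym2.eq, Sym2.rel_iff', hij, hik, hil, hjk, hjl, hkl,
        hij.symm, hik.symm, hil.symm, hjk.symm, hjl.symm, hkl.symm])

lemma getVert_eq_support_getElem {V : Type*} {G : SimpleGraph V} {u v : V}
    (p : G.Walk u v) (i : ℕ) (h : i < p.length + 1) :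
    p.getVert i = p.support[i]'(by rw [SimpleGraph.Walk.length_support]; omega) := by
  induction p generalizing i with
  | nil =>
    simp only [SimpleGraph.Walk.length_nil] at h
    simp [show i = 0 by omega]
  | cons ha q ih =>
    cases i with
    | zero => simp
    | succ m =>
      simp only [SimpleGraph.Walk.getVert_cons_succ, SimpleGraph.Walk.support_cons]
      rw [ih m (by simpa [Nat.succ_lt_succ_iff] using h)]
      simp

lemma two_neighbors {V : Type*} [DecidableEq V] {G : SimpleGraph V} {v : V}
    {p : G.Walk v v} (hp : p.IsCycle) {x : V} (hx : x ∈ p.support) :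
    ∃ y z, y ≠ z ∧ p.toSubgraph.Adj x y ∧ p.toSubgraph.Adj x z := by
  set c := p.rotate x hx with hc
  have hcyc : c.IsCycle := hp.rotate hx
  have hL : 3 ≤ c.length := hcyc.three_le_length
  refine ⟨c.getVert 1, c.getVert (c.length - 1), ?_, ?_, ?_⟩
  · have hnd : c.support.tail.Nodup := hcyc.support_nodup
    have h1 : c.getVert 1 = c.support.tail[0]'(by
        simp [List.length_tail, SimpleGraph.Walk.length_support]; omega) := by
      rw [getVert_eq_support_getElem c 1 (by omega)]
      rw [List.getElem_tail]
    have h2 : c.getVert (c.length - 1) = c.support.tail[c.length - 2]'(by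
        simp [List.length_tail, SimpleGraph.Walk.length_support]; omega) := by
      rw [getVert_eq_support_getElem c (c.length - 1) (by omega)]
      rw [List.getElem_tail]
      congr 1
      omega
    rw [h1, h2]
    intro hEq
    have := (List.Nodup.getElem_inj_iff hnd).1 hEq
    omega
  · have := SimpleGraph.Walk.toSubgraph_adj_getVert c (i := 0) (by omega)
    rw [SimpleGraph.Walk.toSubgraph_rotate] at this
    simpa using this
  · have := SimpleGraph.Walk.toSubgraph_adj_getVert c (i := c.length - 1) (by omega)
    rw [SimpleGraph.Walk.toSubgraph_rotate] at this
    have hx' : c.getVert (c.length - 1 + 1) = x := by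
      have h' : c.length - 1 + 1 = c.length := by omega
      rw [h', SimpleGraph.Walk.getVert_length]
    rw [hx'] at this
    exact this.symm

/-- The core combinatorial argument: if every vertex of a nonempty finite set `S`
has two distinct neighbors in `S` in the inversion graph, then `π` contains `321`
or `3412`. -/
lemma main_contradiction {n : ℕ} (π : Equiv.Perm (Fin n))
    (h321 : ¬ Contains321 π) (h3412 : ¬ Contains3412 π)
    (S : Finset (Fin n)) (hS : S.Nonempty)
    (key : ∀ x ∈ S, ∃ y ∈ S, ∃ z ∈ S, y ≠ z ∧ (invGraph π).Adj x y ∧ (invGraph π).Adj x z) :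
    False := by
  classical
  set G := invGraph π with hG
  -- Fact F: no two edges x—y—z with x < y < z.
  have F : ∀ x y z : Fin n, x < y → y < z → G.Adj x y → G.Adj y z → False := by
    intro x y z hxy hyz a1 a2
    exact h321 ⟨x, y, z, hxy, hyz, (invGraph_adj π hyz).1 a2, (invGraph_adj π hxy).1 a1⟩
  -- T : set of vertices of S having a smaller neighbor in S.
  set T : Finset (Fin n) := S.filter (fun w => ∃ u ∈ S, u < w ∧ G.Adj u w) with hT
  have hTne : T.Nonempty := by
    obtain ⟨m, hmS⟩ := S.exists_max_image id hS
    obtain ⟨hmS, hmax⟩ := hmS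
    obtain ⟨y, hyS, z, hzS, hyz, hay, haz⟩ := key m hmS
    have hym : y < m := lt_of_le_of_ne (hmax y hyS) hay.ne'
    exact ⟨m, Finset.mem_filter.2 ⟨hmS, ⟨y, hyS, hym, hay.symm⟩⟩⟩
  obtain ⟨b, hbT, hbmin⟩ := T.exists_min_image (fun w => π w) hTne
  obtain ⟨hbS, u, huS, hub, hadjub⟩ := Finset.mem_filter.1 hbT
  -- every neighbor of b is below b
  have hbelow : ∀ w, G.Adj b w → w < b := by
    intro w hw
    rcases lt_or_ge w b with h | h
    · exact h
    · have hbw : b < w := lt_of_le_of_ne h hw.ne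
      exact absurd (F u b w hub hbw hadjub hw) (by simp)
  obtain ⟨y, hyS, z, hzS, hyzne, hby, hbz⟩ := key b hbS
  have hy : y < b := hbelow y hby
  have hz : z < b := hbelow z hbz
  -- name them a1 < a2
  obtain ⟨a1, a2, ha1S, ha2S, h12, hba1, hba2⟩ :
      ∃ a1 a2, a1 ∈ S ∧ a2 ∈ S ∧ a1 < a2 ∧ G.Adj a1 b ∧ G.Adj a2 b := by
    rcases lt_or_gt_of_ne hyzne with h | h
    · exact ⟨y, z, hyS, hzS, h, hby.symm, hbz.symm⟩
    · exact ⟨z, y, hzS, hyS, h, hbz.symm, hby.symm⟩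
  have ha1b : a1 < b := hbelow a1 hba1.symm
  have ha2b : a2 < b := hbelow a2 hba2.symm
  have hpa1 : π b < π a1 := (invGraph_adj π ha1b).1 hba1
  have hpa12 : π a1 < π a2 := by
    apply lt_of_not_adj π h12
    intro hadj
    exact F a1 a2 b h12 ha2b hadj hba2
  -- a1 has a second neighbor c ≠ b
  obtain ⟨y', hy'S, z', hz'S, hy'z', ha1y', ha1z'⟩ := key a1 ha1S
  obtain ⟨c, hcS, hcb, ha1c⟩ : ∃ c ∈ S, c ≠ b ∧ G.Adj a1 c := by
    by_cases hyb : y' = b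
    · exact ⟨z', hz'S, by rw [← hyb]; exact hy'z'.symm, ha1z'⟩
    · exact ⟨y', hy'S, hyb, ha1y'⟩
  have ha1ltc : a1 < c := by
    rcases lt_or_ge a1 c with h | h
    · exact h
    · have h' : c < a1 := lt_of_le_of_ne h ha1c.ne'
      exact absurd (F c a1 b h' ha1b ha1c.symm hba1) (by simp)
  have hpc : π c < π a1 := (invGraph_adj π ha1ltc).1 ha1c
  have hcT : c ∈ T := Finset.mem_filter.2 ⟨hcS, ⟨a1, ha1S, ha1ltc, ha1c⟩⟩
  have hpbc : π b < π c :=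
    lt_of_le_of_ne (hbmin c hcT) (fun h => hcb (π.injective h.symm))
  have hbc : b < c := by
    rcases lt_or_ge b c with h | h
    · exact h
    · have h' : c < b := lt_of_le_of_ne h hcb
      have : G.Adj c b := (invGraph_adj π h').2 hpbc
      exact absurd (F a1 c b ha1ltc h' ha1c this) (by simp)
  exact h3412 ⟨a1, a2, b, c, h12, ha2b, hbc, hpbc, hpc, hpa12⟩

end Aux

/-- A permutation avoids `321` and `3412` iff its inversion graph is a forest. -/
theorem avoids_321_3412_iff_invGraph_acyclic {n : ℕ} (π : Equiv.Perm (Fin n)) :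
    (¬ Contains321 π ∧ ¬ Contains3412 π) ↔ (invGraph π).IsAcyclic := by
  classical
  constructor
  · rintro ⟨h321, h3412⟩ v p hp
    apply main_contradiction π h321 h3412 p.support.toFinset
      ⟨v, List.mem_toFinset.2 p.start_mem_support⟩
    intro x hx
    obtain ⟨y, z, hyz, hy, hz⟩ := two_neighbors hp (List.mem_toFinset.1 hx)
    have hyv : y ∈ p.support := by
      have := hy.snd_mem
      rwa [SimpleGraph.Walk.verts_toSubgraph] at this
    have hzv : z ∈ p.support := by
      have := hz.snd_mem
      rwa [SimpleGraph.Walk.verts_toSubgraph] at this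
    exact ⟨y, List.mem_toFinset.2 hyv, z, List.mem_toFinset.2 hzv, hyz, hy.adj_sub, hz.adj_sub⟩
  · intro hac
    constructor
    · rintro ⟨i, j, k, hij, hjk, h1, h2⟩
      have aij : (invGraph π).Adj i j := (invGraph_adj π hij).2 h2
      have ajk : (invGraph π).Adj j k := (invGraph_adj π hjk).2 h1
      have aki : (invGraph π).Adj k i :=
        ((invGraph_adj π (hij.trans hjk)).2 (h1.trans h2)).symm
      exact triangle_not_acyclic aij ajk aki hij.ne hjk.ne (hij.trans hjk).ne hac
    · rintro ⟨i, j, k, l, hij, hjk, hkl, h1, h2, h3⟩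
      have aik : (invGraph π).Adj i k :=
        (invGraph_adj π (hij.trans hjk)).2 (h1.trans h2)
      have akj : (invGraph π).Adj k j :=
        ((invGraph_adj π hjk).2 ((h1.trans h2).trans h3)).symm
      have ajl : (invGraph π).Adj j l :=
        (invGraph_adj π (hjk.trans hkl)).2 (h2.trans h3)
      have ali : (invGraph π).Adj l i :=
        ((invGraph_adj π ((hij.trans hjk).trans hkl)).2 h2).symm
      exact quad_not_acyclic aik akj ajl ali hij.ne (hij.trans hjk).ne
        ((hij.trans hjk).trans hkl).ne hjk.ne (hjk.trans hkl).ne hkl.ne hac
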